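/- Let n ∈ ℝ³ with ‖n‖ = 1 and let K ∈ ℝ^{3×3} satisfy K n = 0. Define the tangential and normal parts K^∥ := (𝟙₃ − n ⊗ n) K and K^⊥ := (n ⊗ n) K. Then: ‖sym K‖² = ‖sym K^∥‖² + (1/2)‖Kᵀn‖², ‖skew K‖² = ‖skew K^∥‖² + (1/2)‖Kᵀn‖², tr(K^∥) = tr(K), and ‖K^⊥‖² = ‖Kᵀn‖². -/

import Mathlib

open Matrix

noncomputable section

/-- Symmetric part of a matrix. -/
def msym {n : ℕ} (X : Matrix (Fin n) (Fin n) ℝ) : Matrix (Fin n) (Fin n) ℝ :=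
  (1 / 2 : ℝ) • (X + Xᵀ)

/-- Skew-symmetric part of a matrix. -/
def mskew {n : ℕ} (X : Matrix (Fin n) (Fin n) ℝ) : Matrix (Fin n) (Fin n) ℝ :=
  (1 / 2 : ℝ) • (X - Xᵀ)

/-- Squared Frobenius norm `‖X‖² = tr(XᵀX)`. -/
def mnormSq {n : ℕ} (X : Matrix (Fin n) (Fin n) ℝ) : ℝ :=
  Matrix.trace (Xᵀ * X)

/-- Squared Euclidean norm on `ℝ³`. -/
def vnormSq (v : Fin 3 → ℝ) : ℝ := ∑ i, (v i) ^ 2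

theorem stmt_15 (n : Fin 3 → ℝ) (hn : vnormSq n = 1)
    (K : Matrix (Fin 3) (Fin 3) ℝ) (hK : K.mulVec n = 0) :
    mnormSq (msym K)
        = mnormSq (msym (((1 : Matrix (Fin 3) (Fin 3) ℝ) - vecMulVec n n) * K))
          + (1 / 2 : ℝ) * vnormSq (Kᵀ.mulVec n) ∧
    mnormSq (mskew K)
        = mnormSq (mskew (((1 : Matrix (Fin 3) (Fin 3) ℝ) - vecMulVec n n) * K))
          + (1 / 2 : ℝ) * vnormSq (Kᵀ.mulVec n) ∧
    Matrix.trace (((1 : Matrix (Fin 3) (Fin 3) ℝ) - vecMulVec n n) * K)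
        = Matrix.trace K ∧
    mnormSq (vecMulVec n n * K) = vnormSq (Kᵀ.mulVec n) := by
  have h0 := congrFun hK 0
  have h1 := congrFun hK 1
  have h2 := congrFun hK 2
  simp only [Matrix.mulVec, dotProduct, Fin.sum_univ_three, Pi.zero_apply] at h0 h1 h2
  unfold vnormSq at hn
  simp only [Fin.sum_univ_three] at hn
  refine ⟨?_, ?_, ?_, ?_⟩ <;>
    simp [mnormSq, msym, mskew, vnormSq, Matrix.trace, Matrix.diag, Matrix.mul_apply,
      Matrix.mulVec, dotProduct, Matrix.vecMulVec_apply, Matrix.transpose_apply,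
      Matrix.smul_apply, Matrix.add_apply, Matrix.sub_apply, Matrix.one_apply,
      Fin.sum_univ_three, smul_eq_mul]
  · linear_combination (-(1/2) * ((K 0 0 * n 0 + K 1 0 * n 1 + K 2 0 * n 2)^2 + (K 0 1 * n 0 + K 1 1 * n 1 + K 2 1 * n 2)^2 + (K 0 2 * n 0 + K 1 2 * n 1 + K 2 2 * n 2)^2)) * hn + ((K 0 0 * n 0 + K 1 0 * n 1 + K 2 0 * n 2) - (1/2) * (n 0 * (K 0 0 * n 0 + K 0 1 * n 1 + K 0 2 * n 2) + n 1 * (K 1 0 * n 0 + K 1 1 * n 1 + K 1 2 * n 2) + n 2 * (K 2 0 * n 0 + K 2 1 * n 1 + K 2 2 * n 2)) * n 0) * h0 + ((K 0 1 * n 0 + K 1 1 * n 1 + K 2 1 * n 2) - (1/2) * (n 0 * (K 0 0 * n 0 + K 0 1 * n 1 + K 0 2 * n 2) + n 1 * (K 1 0 * n 0 + K 1 1 * n 1 + K 1 2 * n 2) + n 2 * (K 2 0 * n 0 + K 2 1 * n 1 + K 2 2 * n 2)) * n 1) * h1 + ((K 0 2 * n 0 + K 1 2 * n 1 + K 2 2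 * n 2) - (1/2) * (n 0 * (K 0 0 * n 0 + K 0 1 * n 1 + K 0 2 * n 2) + n 1 * (K 1 0 * n 0 + K 1 1 * n 1 + K 1 2 * n 2) + n 2 * (K 2 0 * n 0 + K 2 1 * n 1 + K 2 2 * n 2)) * n 2) * h2
  · linear_combination (-(1/2) * ((K 0 0 * n 0 + K 1 0 * n 1 + K 2 0 * n 2)^2 + (K 0 1 * n 0 + K 1 1 * n 1 + K 2 1 * n 2)^2 + (K 0 2 * n 0 + K 1 2 * n 1 + K 2 2 * n 2)^2)) * hn + (-(K 0 0 * n 0 + K 1 0 * n 1 + K 2 0 * n 2) + (1/2) * (n 0 * (K 0 0 * n 0 + K 0 1 * n 1 + K 0 2 * n 2) + n 1 * (K 1 0 * n 0 + K 1 1 * n 1 + K 1 2 * n 2) + n 2 * (K 2 0 * n 0 + K 2 1 * n 1 + K 2 2 * n 2)) * n 0) * h0 + (-(K 0 1 * n 0 + K 1 1 * n 1 + K 2 1 * n 2) + (1/2) * (n 0 * (K 0 0 * n 0 + K 0 1 * n 1 + K 0 2 * n 2) + n 1 * (K 1 0 * n 0 + K 1 1 * n 1 + K 1 2 * n 2)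 + n 2 * (K 2 0 * n 0 + K 2 1 * n 1 + K 2 2 * n 2)) * n 1) * h1 + (-(K 0 2 * n 0 + K 1 2 * n 1 + K 2 2 * n 2) + (1/2) * (n 0 * (K 0 0 * n 0 + K 0 1 * n 1 + K 0 2 * n 2) + n 1 * (K 1 0 * n 0 + K 1 1 * n 1 + K 1 2 * n 2) + n 2 * (K 2 0 * n 0 + K 2 1 * n 1 + K 2 2 * n 2)) * n 2) * h2
  · linear_combination (-(n 0)) * h0 + (-(n 1)) * h1 + (-(n 2)) * h2
  · linear_combination ((K 0 0 * n 0 + K 1 0 * n 1 + K 2 0 * n 2)^2 + (K 0 1 * n 0 + K 1 1 * n 1 + K 2 1 * n 2)^2 + (K 0 2 * n 0 + K 1 2 * n 1 + K 2 2 * n 2)^2) * hn
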